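/- Let r, s ≥ 1 with n = rs > 1, and let C_{(r^s)} ⊆ S_n be the conjugacy class of permutations that are products of s disjoint cycles of length r. Then Cellini's cyclic descent map on C_{(r^s)} is not closed under cyclic rotation: it is NOT the case that for every π ∈ C_{(r^s)} there exists π' ∈ C_{(r^s)} with CDes(π') = sh(CDes(π)). -/

import Mathlib

open Finset
open Fin.NatCast Fin.CommRing

/-- One-line notation value of a permutation at (1-indexed) position `i`:
`oneline π i = π_i` (as a number in `{1,…,n}`), and `0` if `i` is out of range. -/
def oneline {n : ℕ} (π : Equiv.Perm (Fin n)) (i : ℕ) : ℕ :=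
  if h : i - 1 < n then (π ⟨i - 1, h⟩ : ℕ) + 1 else 0

/-- Cellini's cyclic descent set `CDes(π) = {i ∈ [n] : π_i > π_{i+1}}`,
with the convention `π_{n+1} := π_1`. -/
def CDes {n : ℕ} (π : Equiv.Perm (Fin n)) : Finset ℕ :=
  (Finset.Icc 1 n).filter fun i => oneline π (i % n + 1) < oneline π i

/-- The cyclic shift map on subsets of `[n]`, induced by `i ↦ i + 1 (mod n)`. -/
def sh (n : ℕ) (S : Finset ℕ) : Finset ℕ := S.image fun i => i % n + 1

/-- The cycle type of a permutation, including fixed points as parts equal to `1`;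
a multiset of parts summing to `n`. -/
def fullCycleType {n : ℕ} (π : Equiv.Perm (Fin n)) : Multiset ℕ :=
  π.cycleType + Multiset.replicate (n - π.support.card) 1

/- ---------- auxiliary lemmas ---------- -/

lemma addRight_pow_apply {n : ℕ} [NeZero n] (a x : Fin n) (k : ℕ) :
    ((Equiv.addRight a) ^ k) x = x + k • a := by
  induction k with
  | zero => simp
  | succ k ih =>
    rw [pow_succ', Equiv.Perm.mul_apply, Equiv.coe_addRight, ih, succ_nsmul']
    abel

lemma smul_cast_eq_zero_iff {n : ℕ} [NeZero n] (k t : ℕ) :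
    (k • ((t : ℕ) : Fin n) = 0) ↔ (n : ℕ) ∣ k * t := by
  rw [nsmul_eq_mul, show ((k:ℕ) : Fin n) * ((t:ℕ) : Fin n) = ((k*t : ℕ) : Fin n) by
    rw [Nat.cast_mul], Fin.natCast_eq_zero]

lemma fullCycleType_addRight {n : ℕ} [NeZero n] (t : ℕ) :
    fullCycleType (Equiv.addRight ((t : ℕ) : Fin n)) =
      Multiset.replicate (Nat.gcd t n) (n / Nat.gcd t n) := by
  have hn : 0 < n := Nat.pos_of_ne_zero (NeZero.ne n)
  set σ : Equiv.Perm (Fin n) := Equiv.addRight ((t : ℕ) : Fin n) with hσ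
  set d := Nat.gcd t n with hd
  have hdpos : 0 < d := Nat.gcd_pos_of_pos_right t hn
  have hdn : d ∣ n := Nat.gcd_dvd_right t n
  have hdt : d ∣ t := Nat.gcd_dvd_left t n
  set m := n / d with hm
  have hmd : m * d = n := Nat.div_mul_cancel hdn
  have hmpos : 0 < m := Nat.div_pos (Nat.le_of_dvd hn hdn) hdpos
  obtain ⟨t', ht'⟩ := hdt
  have ht'm : t / d = t' := by rw [ht', Nat.mul_div_cancel_left _ hdpos]
  have hcop : Nat.Coprime t' m := by
    have := Nat.coprime_div_gcd_div_gcd (m := t) (n := n) hdpos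
    rwa [← hd, ht'm, ← hm] at this
  have hfix : ∀ (k : ℕ) (x : Fin n), (σ ^ k) x = x ↔ m ∣ k := by
    intro k x
    rw [hσ, addRight_pow_apply, add_eq_left, smul_cast_eq_zero_iff]
    constructor
    · intro h
      have h2 : m * d ∣ (k * t') * d := by
        rw [hmd]
        have : (k * t') * d = k * t := by rw [ht']; ring
        rw [this]; exact h
      have h3 : m ∣ k * t' := (Nat.mul_dvd_mul_iff_right hdpos).mp h2
      exact Nat.Coprime.dvd_of_dvd_mul_right hcop.symm h3
    · rintro ⟨c, rfl⟩
      rw [ht']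
      exact ⟨c * t', by rw [← hmd]; ring⟩
  by_cases h0 : n ∣ t
  · have hc0 : ((t : ℕ) : Fin n) = 0 := Fin.natCast_eq_zero.mpr h0
    have hσ1 : σ = 1 := by
      rw [hσ, hc0]; ext x; simp
    have hdn' : d = n := by rw [hd, Nat.gcd_eq_right h0]
    have hm1 : m = 1 := by rw [hm, hdn', Nat.div_self hn]
    rw [hσ1, hdn', hm1]
    unfold fullCycleType
    simp [Equiv.Perm.cycleType_one]
  · have hm1 : m ≠ 1 := by
      intro h1
      apply h0
      have hdn2 : d = n := by rw [← hmd, h1, one_mul]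
      exact hdn2 ▸ Nat.gcd_dvd_left t n
    have hsupp : σ.support = Finset.univ := by
      apply Finset.eq_univ_iff_forall.mpr
      intro x
      rw [Equiv.Perm.mem_support]
      intro hx
      have : m ∣ 1 := (hfix 1 x).mp (by rwa [pow_one])
      exact hm1 (Nat.dvd_one.mp this)
    have hall : ∀ a ∈ σ.cycleType, a = m := by
      intro a ha
      rw [Equiv.Perm.cycleType_def, Multiset.mem_map] at ha
      obtain ⟨c, hc, rfl⟩ := ha
      have hcmem : c ∈ σ.cycleFactorsFinset := hc
      have hcyc : c.IsCycle := (Equiv.Perm.mem_cycleFactorsFinset_iff.mp hcmem).1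
      obtain ⟨x, hx, -⟩ := hcyc
      have hxs : x ∈ c.support := Equiv.Perm.mem_support.mpr hx
      have hceq : c = σ.cycleOf x := Equiv.Perm.cycle_is_cycleOf hxs hcmem
      have hcyc' : c.IsCycle := (Equiv.Perm.mem_cycleFactorsFinset_iff.mp hcmem).1
      show c.support.card = m
      rw [← hcyc'.orderOf]
      apply Nat.dvd_antisymm
      · apply orderOf_dvd_of_pow_eq_one
        apply (hcyc'.pow_eq_one_iff' hx).mpr
        rw [hceq, Equiv.Perm.cycleOf_pow_apply_self]
        exact (hfix m x).mpr dvd_rfl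
      · apply (hfix (orderOf c) x).mp
        rw [← Equiv.Perm.cycleOf_pow_apply_self, ← hceq, pow_orderOf_eq_one]
        rfl
    have hsum : σ.cycleType.sum = n := by
      rw [Equiv.Perm.sum_cycleType, hsupp, Finset.card_univ, Fintype.card_fin]
    have hcard : Multiset.card σ.cycleType = d := by
      have h1 := Multiset.eq_replicate_card.mpr hall
      have h2 : Multiset.card σ.cycleType * m = n := by
        have := congrArg Multiset.sum h1
        rw [hsum, Multiset.sum_replicate, smul_eq_mul] at this
        exact this.symm
      have : Multiset.card σ.cycleType * m = d * m := by rw [h2, ← hmd]; ring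
      exact Nat.eq_of_mul_eq_mul_right hmpos this
    have hct : σ.cycleType = Multiset.replicate d m := by
      rw [Multiset.eq_replicate_card.mpr hall, hcard]
    unfold fullCycleType
    rw [hct, hsupp, Finset.card_univ, Fintype.card_fin, Nat.sub_self]
    simp

lemma succ_mod_lt_iff {n : ℕ} (hn : 2 ≤ n) (u : ℕ) (hu : u ≤ 2 * n - 2) :
    ((u + 1) % n < u % n ↔ u = n - 1) := by
  rcases Nat.lt_or_ge u n with h | h
  · rcases eq_or_ne u (n - 1) with rfl | hne
    · rw [Nat.mod_eq_of_lt h, show n - 1 + 1 = n by omega, Nat.mod_self]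
      omega
    · rw [Nat.mod_eq_of_lt h, Nat.mod_eq_of_lt (show u + 1 < n by omega)]
      omega
  · have h2 : u - n < n := by omega
    have e1 : u % n = u - n := by rw [Nat.mod_eq_sub_mod h, Nat.mod_eq_of_lt h2]
    have e2 : (u + 1) % n = u + 1 - n := by
      rw [Nat.mod_eq_sub_mod (by omega), Nat.mod_eq_of_lt (by omega)]
    omega

lemma descent_addRight_iff {n : ℕ} [NeZero n] (hn : 2 ≤ n) {t : ℕ} (htn : t < n)
    {i : ℕ} (h1 : 1 ≤ i) (h2 : i ≤ n) :
    (oneline (Equiv.addRight ((t : ℕ) : Fin n)) (i % n + 1)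
      < oneline (Equiv.addRight ((t : ℕ) : Fin n)) i) ↔ i - 1 + t = n - 1 := by
  have hi1 : i - 1 < n := by omega
  have hi2 : i % n + 1 - 1 < n := by
    have := Nat.mod_lt i (show 0 < n by omega); omega
  rw [oneline, oneline, dif_pos hi1, dif_pos hi2]
  have hv : ((t : ℕ) : Fin n).val = t := by
    simp [Fin.val_natCast, Nat.mod_eq_of_lt htn]
  have e1 : ((Equiv.addRight ((t : ℕ) : Fin n)) ⟨i - 1, hi1⟩ : Fin n).val
      = (i - 1 + t) % n := by
    rw [Equiv.coe_addRight, Fin.val_add, hv]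
  have e2 : ((Equiv.addRight ((t : ℕ) : Fin n)) ⟨i % n + 1 - 1, hi2⟩ : Fin n).val
      = (i - 1 + t + 1) % n := by
    rw [Equiv.coe_addRight, Fin.val_add, hv]
    show (i % n + 1 - 1 + t) % n = _
    rw [show i % n + 1 - 1 = i % n by omega, Nat.mod_add_mod,
      show i + t = i - 1 + t + 1 by omega]
  rw [e1, e2, Nat.add_lt_add_iff_right]
  exact succ_mod_lt_iff hn _ (by omega)

lemma CDes_addRight {n : ℕ} [NeZero n] (hn : 2 ≤ n) {j : ℕ} (hj1 : 1 ≤ j) (hjn : j ≤ n) :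
    CDes (Equiv.addRight (((n - j : ℕ) : Fin n))) = {j} := by
  ext i
  simp only [CDes, Finset.mem_filter, Finset.mem_Icc, Finset.mem_singleton]
  constructor
  · rintro ⟨⟨h1, h2⟩, hlt⟩
    rw [descent_addRight_iff hn (by omega) h1 h2] at hlt
    omega
  · rintro rfl
    refine ⟨⟨hj1, hjn⟩, ?_⟩
    rw [descent_addRight_iff hn (by omega) hj1 hjn]
    omega

lemma eq_addRight_of_CDes_singleton {n : ℕ} [NeZero n] (hn : 2 ≤ n) {j : ℕ}
    (hj1 : 1 ≤ j) (hjn : j ≤ n) {π : Equiv.Perm (Fin n)} (h : CDes π = {j}) :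
    π = Equiv.addRight (((n - j : ℕ) : Fin n)) := by
  have hnpos : 0 < n := by omega
  -- ascent facts
  have hasc : ∀ (i : ℕ) (h1 : 1 ≤ i) (h2 : i ≤ n) (h3 : i ≠ j),
      π ⟨i - 1, by omega⟩ < π ⟨i % n, Nat.mod_lt i hnpos⟩ := by
    intro i h1 h2 hij
    have hnot : i ∉ CDes π := by rw [h]; simpa using hij
    simp only [CDes, Finset.mem_filter, Finset.mem_Icc, not_and, not_lt] at hnot
    have hle := hnot ⟨h1, h2⟩
    have hi1 : i - 1 < n := by omega
    have hi2 : i % n + 1 - 1 < n := by have := Nat.mod_lt i hnpos; omega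
    rw [oneline, oneline, dif_pos hi1, dif_pos hi2] at hle
    have hne : (⟨i - 1, by omega⟩ : Fin n) ≠ ⟨i % n, Nat.mod_lt i hnpos⟩ := by
      intro hcon
      have := congrArg Fin.val hcon
      simp only at this
      rcases eq_or_lt_of_le h2 with rfl | hlt
      · rw [Nat.mod_self] at this; omega
      · rw [Nat.mod_eq_of_lt hlt] at this; omega
    have hne2 : π ⟨i - 1, by omega⟩ ≠ π ⟨i % n, Nat.mod_lt i hnpos⟩ :=
      fun hc => hne (π.injective hc)
    have : (π ⟨i - 1, by omega⟩ : Fin n).val ≤ (π ⟨i % n + 1 - 1, hi2⟩ : Fin n).val := by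
      omega
    have heq : (⟨i % n + 1 - 1, hi2⟩ : Fin n) = ⟨i % n, Nat.mod_lt i hnpos⟩ := by
      apply Fin.ext; simp
    rw [heq] at this
    rw [Fin.lt_def]
    rcases lt_or_eq_of_le this with hlt | heq2
    · exact hlt
    · exact absurd (Fin.ext heq2) hne2
  -- the shifted map is strictly monotone
  set w : Fin n := ((j : ℕ) : Fin n) with hw
  set gE : Equiv.Perm (Fin n) := (Equiv.addRight w).trans π with hgE
  have hg : StrictMono ⇑gE := by
    obtain ⟨m, rfl⟩ : ∃ m, n = m + 1 := ⟨n - 1, by omega⟩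
    rw [Fin.strictMono_iff_lt_succ]
    intro p
    have hq : (p : ℕ) < m := p.isLt
    have hjmlt : j % (m + 1) < m + 1 := Nat.mod_lt j (by omega)
    obtain ⟨q, hqdef⟩ : ∃ q, q = (p : ℕ) := ⟨_, rfl⟩
    obtain ⟨b, hbdef⟩ : ∃ b, b = (q + j % (m + 1)) % (m + 1) := ⟨_, rfl⟩
    obtain ⟨i, hi⟩ : ∃ i, i = b + 1 := ⟨_, rfl⟩
    have hbval : b = q + j % (m + 1) ∨
        (m + 1 ≤ q + j % (m + 1) ∧ b = q + j % (m + 1) - (m + 1)) := by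
      rcases Nat.lt_or_ge (q + j % (m + 1)) (m + 1) with hc | hc
      · exact Or.inl (by rw [hbdef, Nat.mod_eq_of_lt hc])
      · refine Or.inr ⟨hc, ?_⟩
        rw [hbdef, Nat.mod_eq_sub_mod hc, Nat.mod_eq_of_lt (by omega)]
    have hblt : b < m + 1 := hbdef ▸ Nat.mod_lt _ (by omega)
    have hjm : (j < m + 1 ∧ j % (m + 1) = j) ∨ (j = m + 1 ∧ j % (m + 1) = 0) := by
      rcases eq_or_lt_of_le hjn with rfl | hlt
      · exact Or.inr ⟨rfl, Nat.mod_self _⟩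
      · exact Or.inl ⟨hlt, Nat.mod_eq_of_lt hlt⟩
    have h1 : 1 ≤ i := by omega
    have h2 : i ≤ m + 1 := by omega
    have hij : i ≠ j := by omega
    have key := hasc i h1 h2 hij
    have eA : (Fin.castSucc p + w : Fin (m + 1)) = ⟨i - 1, by omega⟩ := by
      apply Fin.ext
      rw [Fin.val_add]
      simp only [Fin.coe_castSucc, hw, Fin.val_natCast]
      rw [← hqdef, ← hbdef]
      omega
    have eB : (p.succ + w : Fin (m + 1)) = ⟨i % (m + 1), Nat.mod_lt i hnpos⟩ := by
      apply Fin.ext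
      rw [Fin.val_add]
      simp only [Fin.val_succ, hw, Fin.val_natCast]
      have e3 : i % (m + 1) = (q + j % (m + 1) + 1) % (m + 1) := by
        rw [hi, hbdef, Nat.mod_add_mod]
      rw [e3, show (p : ℕ) + 1 + j % (m + 1) = q + j % (m + 1) + 1 by omega]
    show gE (Fin.castSucc p) < gE p.succ
    rw [hgE]
    simp only [Equiv.trans_apply, Equiv.coe_addRight]
    show π (Fin.castSucc p + w) < π (p.succ + w)
    rw [eA, eB]
    exact key
  -- strictly monotone bijection is the identity
  have hid : ∀ x : Fin n, gE x = x := by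
    haveI : WellFoundedLT (Fin n) := Finite.to_wellFoundedLT
    have hsymm : StrictMono ⇑gE.symm := by
      intro a b hab
      apply hg.lt_iff_lt.mp
      simpa using hab
    intro x
    have h1 : x ≤ gE x := StrictMono.le_apply hg
    have h2 : gE x ≤ gE.symm (gE x) := StrictMono.le_apply hsymm
    rw [Equiv.symm_apply_apply] at h2
    exact le_antisymm h2 h1
  -- conclude
  apply Equiv.ext
  intro x
  have hx := hid (x + ((n - j : ℕ) : Fin n))
  rw [hgE] at hx
  simp only [Equiv.trans_apply, Equiv.coe_addRight] at hx
  have hcancel : ((n - j : ℕ) : Fin n) + w = 0 := by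
    rw [hw, ← Nat.cast_add, show n - j + j = n by omega, Fin.natCast_self]
  rw [add_assoc, hcancel, add_zero] at hx
  simp only [Equiv.coe_addRight]
  exact hx

/-- For `n = rs > 1`, Cellini's cyclic descent map on the conjugacy class
`C_{(r^s)}` is not closed under cyclic rotation. -/
theorem stmt15 (r s : ℕ) (hr : 1 ≤ r) (hs : 1 ≤ s) (hn : 1 < r * s) :
    ¬ ∀ π : Equiv.Perm (Fin (r * s)),
        fullCycleType π = Multiset.replicate s r →
        ∃ π' : Equiv.Perm (Fin (r * s)),
          fullCycleType π' = Multiset.replicate s r ∧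
          CDes π' = sh (r * s) (CDes π) := by
  intro H
  haveI : NeZero (r * s) := ⟨by omega⟩
  have hn2 : 2 ≤ r * s := hn
  have hsn : s ≤ r * s := Nat.le_mul_of_pos_left s (by omega)
  by_cases hs1 : s = 1
  · -- class of (r*s)-cycles; take the cycle with CDes = {n-1}
    subst hs1
    have hj1 : 1 ≤ r * 1 - 1 := by omega
    have hjn : r * 1 - 1 ≤ r * 1 := by omega
    set π : Equiv.Perm (Fin (r * 1)) :=
      Equiv.addRight (((r * 1 - (r * 1 - 1) : ℕ) : Fin (r * 1))) with hπ
    have hty : fullCycleType π = Multiset.replicate 1 r := by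
      rw [hπ, fullCycleType_addRight, show r * 1 - (r * 1 - 1) = 1 by omega,
        Nat.gcd_one_left, Nat.div_one]
      congr 1
      omega
    obtain ⟨π', hty', hcd⟩ := H π hty
    rw [hπ, CDes_addRight hn2 hj1 hjn] at hcd
    have hsh : sh (r * 1) {r * 1 - 1} = {r * 1} := by
      unfold sh
      rw [Finset.image_singleton, Nat.mod_eq_of_lt (by omega)]
      congr 1
      omega
    rw [hsh] at hcd
    have hπ' := eq_addRight_of_CDes_singleton hn2 (show 1 ≤ r * 1 by omega)
      (le_refl (r * 1)) hcd
    rw [hπ', fullCycleType_addRight, Nat.sub_self, Nat.gcd_zero_left,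
      Nat.div_self (by omega : 0 < r * 1)] at hty'
    have := congrArg Multiset.card hty'
    rw [Multiset.card_replicate, Multiset.card_replicate] at this
    omega
  · -- s ≥ 2; take the permutation with CDes = {s}
    have hs2 : 2 ≤ s := by omega
    set π : Equiv.Perm (Fin (r * s)) :=
      Equiv.addRight (((r * s - s : ℕ) : Fin (r * s))) with hπ
    have hty : fullCycleType π = Multiset.replicate s r := by
      rw [hπ, fullCycleType_addRight]
      have h1 : r * s - s = (r - 1) * s := by rw [Nat.sub_mul, one_mul]
      have h2 : Nat.gcd (r - 1) r = 1 := by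
        obtain ⟨k, rfl⟩ : ∃ k, r = k + 1 := ⟨r - 1, by omega⟩
        simp only [Nat.add_sub_cancel]
        rw [show k + 1 = 1 + k by omega, Nat.gcd_add_self_right, Nat.gcd_one_right]
      have h3 : Nat.gcd (r * s - s) (r * s) = s := by
        rw [h1, Nat.gcd_mul_right, h2, one_mul]
      rw [h3]
      congr 1
      rw [Nat.mul_comm]
      exact Nat.mul_div_cancel_left r (by omega : 0 < s)
    obtain ⟨π', hty', hcd⟩ := H π hty
    rw [hπ, CDes_addRight hn2 hs hsn] at hcd
    have hsh : sh (r * s) {s} = {s % (r * s) + 1} := by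
      unfold sh; rw [Finset.image_singleton]
    rw [hsh] at hcd
    have hj'1 : 1 ≤ s % (r * s) + 1 := by omega
    have hj'n : s % (r * s) + 1 ≤ r * s := by
      have := Nat.mod_lt s (show 0 < r * s by omega); omega
    have hπ' := eq_addRight_of_CDes_singleton hn2 hj'1 hj'n hcd
    rw [hπ', fullCycleType_addRight] at hty'
    have hcard := congrArg Multiset.card hty'
    rw [Multiset.card_replicate, Multiset.card_replicate] at hcard
    have hd1 : Nat.gcd (r * s - (s % (r * s) + 1)) (r * s) ∣ r * s - (s % (r * s) + 1) :=
      Nat.gcd_dvd_left _ _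
    have hd2 : Nat.gcd (r * s - (s % (r * s) + 1)) (r * s) ∣ r * s :=
      Nat.gcd_dvd_right _ _
    rw [hcard] at hd1 hd2
    rcases eq_or_lt_of_le hsn with heq | hlt
    · -- s = r * s : then s ∣ s - 1 with s ≥ 2, contradiction
      rw [← heq, Nat.mod_self] at hd1
      have h0 : 0 < s - (0 + 1) := by omega
      have := Nat.le_of_dvd h0 hd1
      omega
    · -- s < r * s : then s ∣ r*s - (s+1) and s ∣ r*s, so s ∣ s + 1
      rw [Nat.mod_eq_of_lt hlt] at hd1
      have hdvd : s ∣ s + 1 := by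
        have h3 : r * s - (r * s - (s + 1)) = s + 1 := by omega
        exact h3 ▸ Nat.dvd_sub hd2 hd1
      have : s ∣ 1 := by
        have := Nat.dvd_sub hdvd (dvd_refl s)
        simpa using this
      have := Nat.le_of_dvd one_pos this
      omega
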